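/- Let γ^a and γ^b be the DR pseudo-outcomes of the two systems, i.e., γ^c := (∏_{j=0}^{n} 1_{A^c_j}/π^c_j)·Y + Σ_{j=0}^{n} μ^c_j·(1 − 1_{A^c_j}/π^c_j)·∏_{k=0}^{j−1} 1_{A^c_k}/π^c_k for c ∈ {a, b}. Then E[γ^a − γ^b | 𝒢_0] = μ^a_0 − μ^b_0 P-almost surely; i.e., the conditional expectation of the DR pseudo-outcome for CATE given the initial history equals the conditional average treatment effect (Lemma on the conditional expectation of the DR pseudo-outcome, CATE case). -/

import Mathlib

open MeasureTheory Finset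


theorem DR_arm {Ω : Type*} {F : MeasurableSpace Ω} {P : Measure Ω} [IsProbabilityMeasure P]
    (n : ℕ) (G : ℕ → MeasurableSpace Ω) (hG_mono : Monotone G) (hG_le : ∀ j, G j ≤ F)
    (Y : Ω → ℝ) (hY_meas : Measurable Y) (CY : ℝ) (hY_bd : ∀ x, |Y x| ≤ CY)
    (A : ℕ → Set Ω) (hA : ∀ j ≤ n, MeasurableSet[G (j + 1)] (A j))
    (π : ℕ → Ω → ℝ) (hπ_meas : ∀ j ≤ n, Measurable[G j] (π j))
    (ε : ℝ) (hε : 0 < ε)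
    (hπ_bd : ∀ j ≤ n, ∀ᵐ x ∂P, ε ≤ π j x ∧ π j x ≤ 1)
    (hπ_ce : ∀ j ≤ n, π j =ᵐ[P] P[(A j).indicator (fun _ => (1 : ℝ)) | G j])
    (μ : ℕ → Ω → ℝ) (hμ_meas : ∀ j ≤ n, Measurable[G j] (μ j))
    (Cμ : ℝ) (hμ_bd : ∀ j ≤ n, ∀ x, |μ j x| ≤ Cμ)
    (hμ_n : P[fun x => (A n).indicator (fun _ => (1 : ℝ)) x * Y x | G n]
        =ᵐ[P] fun x => π n x * μ n x)
    (hμ_rec : ∀ j < n,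
        P[fun x => (A j).indicator (fun _ => (1 : ℝ)) x * μ (j + 1) x | G j]
          =ᵐ[P] fun x => π j x * μ j x)
    (γ : Ω → ℝ)
    (hγ : γ = fun x =>
      (∏ j ∈ range (n + 1), (A j).indicator (fun _ => (1 : ℝ)) x / π j x) * Y x
      + ∑ j ∈ range (n + 1),
          μ j x * (1 - (A j).indicator (fun _ => (1 : ℝ)) x / π j x)
            * ∏ k ∈ range j, (A k).indicator (fun _ => (1 : ℝ)) x / π k x) :
    Integrable γ P ∧ P[γ | G 0] =ᵐ[P] μ 0 := by
  classical
  -- notation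
  set I : ℕ → Ω → ℝ := fun j => (A j).indicator (fun _ => (1 : ℝ)) with hI
  set D : ℕ → Ω → ℝ := fun j x => I j x / π j x with hD
  set K : ℝ := max ε⁻¹ 1 with hK
  have hK1 : (1 : ℝ) ≤ K := le_max_right _ _
  have hK0 : (0 : ℝ) ≤ K := le_trans zero_le_one hK1
  have hεK : ε⁻¹ ≤ K := le_max_left _ _
  -- tail pseudo-outcomes
  set T : ℕ → Ω → ℝ := fun m x =>
    (∏ j ∈ Ico m (n + 1), D j x) * Y x
    + ∑ j ∈ Ico m (n + 1), μ j x * (1 - D j x) * ∏ k ∈ Ico m j, D k x with hT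
  have hT_top : ∀ x, T (n + 1) x = Y x := by
    intro x; simp [hT, Finset.Ico_self]
  have hγT : γ = T 0 := by
    funext x
    simp only [hγ, hT, hD, hI, Finset.range_eq_Ico]
  -- decomposition
  have hT_dec : ∀ m ≤ n, ∀ x, T m x = D m x * T (m + 1) x + μ m x * (1 - D m x) := by
    intro m hm x
    have h1 : m < n + 1 := Nat.lt_succ_of_le hm
    have hsum : ∑ j ∈ Ico (m + 1) (n + 1), μ j x * (1 - D j x) * ∏ k ∈ Ico m j, D k x
        = D m x * ∑ j ∈ Ico (m + 1) (n + 1),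
            μ j x * (1 - D j x) * ∏ k ∈ Ico (m + 1) j, D k x := by
      rw [Finset.mul_sum]
      refine Finset.sum_congr rfl fun j hj => ?_
      rw [Finset.prod_eq_prod_Ico_succ_bot (Nat.lt_of_succ_le (Finset.mem_Ico.mp hj).1)]
      ring
    simp only [hT]
    rw [Finset.prod_eq_prod_Ico_succ_bot h1, Finset.sum_eq_sum_Ico_succ_bot h1, hsum,
      Finset.Ico_self, Finset.prod_empty]
    ring
  -- measurability facts
  have hImeas : ∀ j ≤ n, Measurable (I j) := fun j hj =>
    measurable_one.indicator (hG_le (j + 1) _ (hA j hj))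
  have hImeasG : ∀ j ≤ n, Measurable[G (j + 1)] (I j) := fun j hj =>
    (@measurable_const ℝ Ω _ (G (j + 1)) 1).indicator (hA j hj)
  have hπmeasF : ∀ j ≤ n, Measurable (π j) := fun j hj =>
    (hπ_meas j hj).mono (hG_le j) le_rfl
  have hDmeas : ∀ j ≤ n, Measurable (D j) := fun j hj =>
    (hImeas j hj).div (hπmeasF j hj)
  have hDmeasG : ∀ j ≤ n, Measurable[G (j + 1)] (D j) := fun j hj =>
    (hImeasG j hj).div ((hπ_meas j hj).mono (hG_mono (Nat.le_succ j)) le_rfl)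
  have hμmeasF : ∀ j ≤ n, Measurable (μ j) := fun j hj =>
    (hμ_meas j hj).mono (hG_le j) le_rfl
  have hTmeas : ∀ m, Measurable (T m) := by
    intro m
    apply Measurable.add
    · exact (Finset.measurable_prod _ fun j hj =>
        hDmeas j (Nat.lt_succ_iff.mp (Finset.mem_Ico.mp hj).2)).mul hY_meas
    · apply Finset.measurable_sum
      intro j hj
      have hjn : j ≤ n := Nat.lt_succ_iff.mp (Finset.mem_Ico.mp hj).2
      exact ((hμmeasF j hjn).mul (measurable_const.sub (hDmeas j hjn))).mul
        (Finset.measurable_prod _ fun k hk =>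
          hDmeas k (le_trans (Nat.le_of_lt_succ
            (Nat.lt_succ_of_lt (Finset.mem_Ico.mp hk).2)) hjn))
  -- a.e. bounds
  have hgood : ∀ᵐ x ∂P, ∀ j, j ≤ n → ε ≤ π j x ∧ π j x ≤ 1 := by
    rw [MeasureTheory.ae_all_iff]
    intro j
    by_cases hj : j ≤ n
    · filter_upwards [hπ_bd j hj] with x hx _; exact hx
    · filter_upwards with x hx; exact absurd hx hj
  have hIabs : ∀ j x, |I j x| ≤ 1 := by
    intro j x
    by_cases hx : x ∈ A j <;>
      simp [hI, Set.indicator_of_mem, Set.indicator_of_notMem, hx]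
  have hD_bd : ∀ᵐ x ∂P, ∀ j, j ≤ n → |D j x| ≤ K := by
    filter_upwards [hgood] with x hx j hj
    have hπx := hx j hj
    have hπpos : (0:ℝ) < π j x := lt_of_lt_of_le hε hπx.1
    have habs : |D j x| = |I j x| / π j x := by
      rw [hD]; rw [abs_div, abs_of_pos hπpos]
    rw [habs]
    calc |I j x| / π j x ≤ 1 / ε := div_le_div₀ zero_le_one (hIabs j x) hε hπx.1
      _ = ε⁻¹ := one_div ε
      _ ≤ K := hεK
  -- bound for products of D's
  have hprod_bd : ∀ x, (∀ j, j ≤ n → |D j x| ≤ K) → ∀ s : Finset ℕ,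
      s ⊆ range (n + 1) → |∏ j ∈ s, D j x| ≤ K ^ (n + 1) := by
    intro x hx s hs
    rw [Finset.abs_prod]
    calc ∏ j ∈ s, |D j x| ≤ ∏ _j ∈ s, K :=
          Finset.prod_le_prod (fun _ _ => abs_nonneg _)
            (fun j hj => hx j (Nat.lt_succ_iff.mp (Finset.mem_range.mp (hs hj))))
      _ = K ^ s.card := Finset.prod_const K
      _ ≤ K ^ (n + 1) := pow_le_pow_right₀ hK1
          (by simpa using Finset.card_le_card hs)
  set CT : ℝ := K ^ (n + 1) * CY + (n + 1) * (Cμ * (1 + K) * K ^ (n + 1)) with hCT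
  have hT_bd : ∀ m, ∀ᵐ x ∂P, |T m x| ≤ CT := by
    intro m
    filter_upwards [hD_bd] with x hx
    have hCμ0 : (0:ℝ) ≤ Cμ := le_trans (abs_nonneg _) (hμ_bd n le_rfl x)
    have hB0 : (0:ℝ) ≤ Cμ * (1 + K) * K ^ (n + 1) := by positivity
    have hsub1 : Ico m (n + 1) ⊆ range (n + 1) := by
      rw [Finset.range_eq_Ico]; exact Finset.Ico_subset_Ico (Nat.zero_le m) le_rfl
    have h1 : |(∏ j ∈ Ico m (n + 1), D j x) * Y x| ≤ K ^ (n + 1) * CY := by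
      rw [abs_mul]
      exact mul_le_mul (hprod_bd x hx _ hsub1) (hY_bd x) (abs_nonneg _)
        (pow_nonneg hK0 _)
    have h2 : ∀ j ∈ Ico m (n + 1),
        |μ j x * (1 - D j x) * ∏ k ∈ Ico m j, D k x| ≤ Cμ * (1 + K) * K ^ (n + 1) := by
      intro j hj
      have hjn : j ≤ n := Nat.lt_succ_iff.mp (Finset.mem_Ico.mp hj).2
      have hsub2 : Ico m j ⊆ range (n + 1) := by
        rw [Finset.range_eq_Ico]
        exact Finset.Ico_subset_Ico (Nat.zero_le m) (Nat.lt_succ_of_le hjn).le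
      have hμj := hμ_bd j hjn x
      have hDj : |1 - D j x| ≤ 1 + K := by
        calc |1 - D j x| ≤ |(1:ℝ)| + |D j x| := abs_sub _ _
          _ ≤ 1 + K := by rw [abs_one]; linarith [hx j hjn]
      rw [abs_mul, abs_mul]
      exact mul_le_mul (mul_le_mul hμj hDj (abs_nonneg _) hCμ0)
        (hprod_bd x hx _ hsub2) (abs_nonneg _)
        (mul_nonneg hCμ0 (by positivity))
    have hcard : ((Ico m (n + 1)).card : ℝ) ≤ (n + 1 : ℝ) := by
      have := Finset.card_le_card hsub1
      simp only [Finset.card_range] at this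
      exact_mod_cast this
    calc |T m x| ≤ |(∏ j ∈ Ico m (n + 1), D j x) * Y x|
          + |∑ j ∈ Ico m (n + 1), μ j x * (1 - D j x) * ∏ k ∈ Ico m j, D k x| := by
          rw [hT]; exact abs_add_le _ _
      _ ≤ K ^ (n + 1) * CY + ∑ j ∈ Ico m (n + 1),
            |μ j x * (1 - D j x) * ∏ k ∈ Ico m j, D k x| :=
          add_le_add h1 (Finset.abs_sum_le_sum_abs _ _)
      _ ≤ K ^ (n + 1) * CY + (n + 1) * (Cμ * (1 + K) * K ^ (n + 1)) := by
          refine add_le_add_right ?_ _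
          calc (∑ j ∈ Ico m (n + 1), |μ j x * (1 - D j x) * ∏ k ∈ Ico m j, D k x|)
              ≤ (Ico m (n + 1)).card • (Cμ * (1 + K) * K ^ (n + 1)) :=
                Finset.sum_le_card_nsmul _ _ _ h2
            _ = ((Ico m (n + 1)).card : ℝ) * (Cμ * (1 + K) * K ^ (n + 1)) := by
                rw [nsmul_eq_mul]
            _ ≤ (n + 1) * (Cμ * (1 + K) * K ^ (n + 1)) :=
                mul_le_mul_of_nonneg_right hcard hB0
      _ = CT := by rw [hCT]
  -- integrability helper
  have hInt : ∀ (f : Ω → ℝ) (C : ℝ), Measurable f → (∀ᵐ x ∂P, |f x| ≤ C) →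
      Integrable f P := by
    intro f C hf hb
    refine (integrable_const C).mono' hf.aestronglyMeasurable ?_
    filter_upwards [hb] with x hx
    simpa [Real.norm_eq_abs] using hx
  have hTint : ∀ m, Integrable (T m) P := fun m => hInt _ CT (hTmeas m) (hT_bd m)
  have hμint : ∀ j ≤ n, Integrable (μ j) P := fun j hj =>
    hInt _ Cμ (hμmeasF j hj) (Filter.Eventually.of_forall (hμ_bd j hj))
  have hDmul_int : ∀ m ≤ n, ∀ (Z : Ω → ℝ) (CZ : ℝ), Measurable Z →
      (∀ᵐ x ∂P, |Z x| ≤ CZ) → Integrable (fun x => D m x * Z x) P := by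
    intro m hm Z CZ hZm hZb
    refine hInt _ (K * CZ) ((hDmeas m hm).mul hZm) ?_
    filter_upwards [hD_bd, hZb] with x hx hz
    rw [abs_mul]
    exact mul_le_mul (hx m hm) hz (abs_nonneg _) hK0
  have hμD_int : ∀ m ≤ n, Integrable (fun x => μ m x * (1 - D m x)) P := by
    intro m hm
    refine hInt _ (Cμ * (1 + K)) ((hμmeasF m hm).mul (measurable_const.sub (hDmeas m hm))) ?_
    filter_upwards [hD_bd] with x hx
    rw [abs_mul]
    have hDj : |1 - D m x| ≤ 1 + K := by
      calc |1 - D m x| ≤ |(1:ℝ)| + |D m x| := abs_sub _ _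
        _ ≤ 1 + K := by rw [abs_one]; linarith [hx m hm]
    exact mul_le_mul (hμ_bd m hm x) hDj (abs_nonneg _)
      (le_trans (abs_nonneg _) (hμ_bd m hm x))
  -- key pull-out computation
  have key : ∀ m, m ≤ n → ∀ (Z : Ω → ℝ) (CZ : ℝ), Measurable Z →
      (∀ᵐ x ∂P, |Z x| ≤ CZ) →
      (P[fun x => I m x * Z x | G m] =ᵐ[P] fun x => π m x * μ m x) →
      P[fun x => D m x * Z x | G m] =ᵐ[P] μ m := by
    intro m hm Z CZ hZm hZb hZce
    have hIZ_int : Integrable (fun x => I m x * Z x) P := by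
      refine hInt _ CZ ((hImeas m hm).mul hZm) ?_
      filter_upwards [hZb] with x hx
      rw [abs_mul]
      calc |I m x| * |Z x| ≤ 1 * CZ :=
            mul_le_mul (hIabs m x) hx (abs_nonneg _) zero_le_one
        _ = CZ := one_mul _
    have heq1 : (fun x => D m x * Z x) = fun x => (π m x)⁻¹ * (I m x * Z x) := by
      funext x; simp only [hD, div_eq_mul_inv]; ring
    have hDZ_int : Integrable (fun x => (π m x)⁻¹ * (I m x * Z x)) P := by
      rw [← heq1]
      exact hDmul_int m hm Z CZ hZm hZb
    have hpull := condExp_mul_of_stronglyMeasurable_left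
      (f := fun x => (π m x)⁻¹) (g := fun x => I m x * Z x)
      ((hπ_meas m hm).inv).stronglyMeasurable hDZ_int hIZ_int
    calc P[fun x => D m x * Z x | G m]
        = P[fun x => (π m x)⁻¹ * (I m x * Z x) | G m] := by rw [heq1]
      _ =ᵐ[P] (fun x => (π m x)⁻¹) * P[fun x => I m x * Z x | G m] := hpull
      _ =ᵐ[P] μ m := by
          filter_upwards [hZce, hgood] with x h1 h2
          simp only [Pi.mul_apply]
          rw [h1]
          have hπpos : (0:ℝ) < π m x := lt_of_lt_of_le hε (h2 m hm).1
          rw [← mul_assoc, inv_mul_cancel₀ (ne_of_gt hπpos), one_mul]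
  -- conditional expectation of the augmentation term is zero
  have hzero : ∀ m, m ≤ n →
      P[fun x => μ m x * (1 - D m x) | G m] =ᵐ[P] fun _ => (0:ℝ) := by
    intro m hm
    have hIμ_int : Integrable (fun x => I m x * μ m x) P := by
      refine hInt _ Cμ ((hImeas m hm).mul (hμmeasF m hm)) ?_
      refine Filter.Eventually.of_forall fun x => ?_
      rw [abs_mul]
      calc |I m x| * |μ m x| ≤ 1 * Cμ :=
            mul_le_mul (hIabs m x) (hμ_bd m hm x) (abs_nonneg _) zero_le_one
        _ = Cμ := one_mul _
    have hceI : P[fun x => I m x * μ m x | G m] =ᵐ[P] fun x => π m x * μ m x := by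
      have hcomm : (fun x => I m x * μ m x) = (μ m) * (I m) := by
        funext x; exact mul_comm _ _
      have hIint : Integrable (I m) P := hInt _ 1 (hImeas m hm)
        (Filter.Eventually.of_forall (hIabs m))
      have hpull := condExp_mul_of_stronglyMeasurable_left (f := μ m) (g := I m)
        (hμ_meas m hm).stronglyMeasurable (hcomm ▸ hIμ_int) hIint
      calc P[fun x => I m x * μ m x | G m] = P[(μ m) * (I m) | G m] := by rw [hcomm]
        _ =ᵐ[P] (μ m) * P[I m | G m] := hpull
        _ =ᵐ[P] fun x => π m x * μ m x := by
            filter_upwards [hπ_ce m hm] with x hx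
            simp only [Pi.mul_apply]
            rw [← hx, mul_comm]
    have hDμ : P[fun x => D m x * μ m x | G m] =ᵐ[P] μ m :=
      key m hm (μ m) Cμ (hμmeasF m hm) (Filter.Eventually.of_forall (hμ_bd m hm)) hceI
    have hdiff : (fun x => μ m x * (1 - D m x))
        = (fun x => μ m x) - (fun x => D m x * μ m x) := by
      funext x; simp only [Pi.sub_apply]; ring
    have hsub := condExp_sub (μ := P) (m := G m) (hμint m hm)
      (hDmul_int m hm (μ m) Cμ (hμmeasF m hm) (Filter.Eventually.of_forall (hμ_bd m hm)))
    have hself : P[μ m | G m] = μ m :=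
      condExp_of_stronglyMeasurable (hG_le m) (hμ_meas m hm).stronglyMeasurable (hμint m hm)
    calc P[fun x => μ m x * (1 - D m x) | G m]
        = P[(fun x => μ m x) - (fun x => D m x * μ m x) | G m] := by rw [hdiff]
      _ =ᵐ[P] P[μ m | G m] - P[fun x => D m x * μ m x | G m] := hsub
      _ =ᵐ[P] fun _ => (0:ℝ) := by
          rw [hself]
          filter_upwards [hDμ] with x hx
          simp only [Pi.sub_apply, hx, sub_self]
  -- main backward induction
  have hmain : ∀ d m, m + d = n → P[T m | G m] =ᵐ[P] μ m := by
    intro d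
    induction d with
    | zero =>
      intro m hmn
      have hm : m = n := by omega
      subst hm
      have e1 : T m = (fun x => D m x * Y x) + (fun x => μ m x * (1 - D m x)) := by
        funext x
        simp only [Pi.add_apply]
        rw [hT_dec m le_rfl x, hT_top x]
      have hadd := condExp_add (μ := P) (m := G m)
        (hDmul_int m le_rfl Y CY hY_meas (Filter.Eventually.of_forall hY_bd))
        (hμD_int m le_rfl)
      have h1 := key m le_rfl Y CY hY_meas (Filter.Eventually.of_forall hY_bd) hμ_n
      calc P[T m | G m]
          = P[(fun x => D m x * Y x) + (fun x => μ m x * (1 - D m x)) | G m] := by rw [e1]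
        _ =ᵐ[P] P[fun x => D m x * Y x | G m] + P[fun x => μ m x * (1 - D m x) | G m] := hadd
        _ =ᵐ[P] μ m := by
            filter_upwards [h1, hzero m le_rfl] with x hx1 hx2
            simp only [Pi.add_apply, hx1, hx2, add_zero]
    | succ d ih =>
      intro m hmn
      have hm : m ≤ n := by omega
      have hm1 : m + 1 ≤ n := by omega
      have hmlt : m < n := by omega
      have ihm : P[T (m + 1) | G (m + 1)] =ᵐ[P] μ (m + 1) := ih (m + 1) (by omega)
      have hfg_int : Integrable (fun x => D m x * T (m + 1) x) P :=
        hDmul_int m hm (T (m + 1)) CT (hTmeas _) (hT_bd _)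
      have h1 : P[fun x => D m x * T (m + 1) x | G (m + 1)]
          =ᵐ[P] fun x => D m x * μ (m + 1) x := by
        have hpull := condExp_mul_of_stronglyMeasurable_left (f := D m) (g := T (m + 1))
          (hDmeasG m hm).stronglyMeasurable hfg_int (hTint (m + 1))
        refine hpull.trans ?_
        filter_upwards [ihm] with x hx
        simp only [Pi.mul_apply, hx]
      have h2 : P[fun x => D m x * T (m + 1) x | G m] =ᵐ[P] μ m := by
        calc P[fun x => D m x * T (m + 1) x | G m]
            =ᵐ[P] P[P[fun x => D m x * T (m + 1) x | G (m + 1)] | G m] :=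
              (condExp_condExp_of_le (hG_mono (Nat.le_succ m)) (hG_le (m + 1))).symm
          _ =ᵐ[P] P[fun x => D m x * μ (m + 1) x | G m] := condExp_congr_ae h1
          _ =ᵐ[P] μ m := key m hm (μ (m + 1)) Cμ (hμmeasF _ hm1)
              (Filter.Eventually.of_forall (hμ_bd _ hm1)) (hμ_rec m hmlt)
      have e1 : T m = (fun x => D m x * T (m + 1) x)
          + (fun x => μ m x * (1 - D m x)) := by
        funext x
        simp only [Pi.add_apply]
        exact hT_dec m hm x
      have hadd := condExp_add (μ := P) (m := G m) hfg_int (hμD_int m hm)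
      calc P[T m | G m]
          = P[(fun x => D m x * T (m + 1) x) + (fun x => μ m x * (1 - D m x)) | G m] := by
            rw [e1]
        _ =ᵐ[P] P[fun x => D m x * T (m + 1) x | G m]
            + P[fun x => μ m x * (1 - D m x) | G m] := hadd
        _ =ᵐ[P] μ m := by
            filter_upwards [h2, hzero m hm] with x hx1 hx2
            simp only [Pi.add_apply, hx1, hx2, add_zero]
  constructor
  · rw [hγT]; exact hTint 0
  · rw [hγT]
    exact hmain n 0 (by omega)

/-- **Lemma (conditional expectation of the DR pseudo-outcome, CATE case).**
For each arm `c ∈ {a, b}` with treatment events `A^c_j ∈ 𝒢_{j+1}`, propensities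
`π^c_j = E[1_{A^c_j} | 𝒢_j]` with `ε ≤ π^c_j ≤ 1` a.s., and bounded `𝒢_j`-measurable
response functions `μ^c_j` satisfying the recursion
`E[1_{A^c_n}·Y | 𝒢_n] = π^c_n·μ^c_n` and `E[1_{A^c_j}·μ^c_{j+1} | 𝒢_j] = π^c_j·μ^c_j`,
the DR pseudo-outcomes `γ^c` satisfy `E[γ^a − γ^b | 𝒢_0] = μ^a_0 − μ^b_0` P-a.s., i.e.
the conditional expectation of the DR pseudo-outcome for CATE given the initial history
equals the conditional average treatment effect. -/
theorem DR_pseudo_outcome_condexp_CATE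
    {Ω : Type*} {F : MeasurableSpace Ω} {P : Measure Ω} [IsProbabilityMeasure P]
    (n : ℕ) (G : ℕ → MeasurableSpace Ω) (hG_mono : Monotone G) (hG_le : ∀ j, G j ≤ F)
    (Y : Ω → ℝ) (hY_meas : Measurable Y) (CY : ℝ) (hY_bd : ∀ x, |Y x| ≤ CY)
    (Aa Ab : ℕ → Set Ω)
    (hAa : ∀ j ≤ n, MeasurableSet[G (j + 1)] (Aa j))
    (hAb : ∀ j ≤ n, MeasurableSet[G (j + 1)] (Ab j))
    (πa πb : ℕ → Ω → ℝ)
    (hπa_meas : ∀ j ≤ n, Measurable[G j] (πa j)) (hπb_meas : ∀ j ≤ n, Measurable[G j] (πb j))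
    (ε : ℝ) (hε : 0 < ε)
    (hπa_bd : ∀ j ≤ n, ∀ᵐ x ∂P, ε ≤ πa j x ∧ πa j x ≤ 1)
    (hπb_bd : ∀ j ≤ n, ∀ᵐ x ∂P, ε ≤ πb j x ∧ πb j x ≤ 1)
    (hπa_ce : ∀ j ≤ n, πa j =ᵐ[P] P[(Aa j).indicator (fun _ => (1 : ℝ)) | G j])
    (hπb_ce : ∀ j ≤ n, πb j =ᵐ[P] P[(Ab j).indicator (fun _ => (1 : ℝ)) | G j])
    (μa μb : ℕ → Ω → ℝ)
    (hμa_meas : ∀ j ≤ n, Measurable[G j] (μa j)) (hμb_meas : ∀ j ≤ n, Measurable[G j] (μb j))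
    (Cμ : ℝ) (hμa_bd : ∀ j ≤ n, ∀ x, |μa j x| ≤ Cμ) (hμb_bd : ∀ j ≤ n, ∀ x, |μb j x| ≤ Cμ)
    (hμa_n : P[fun x => (Aa n).indicator (fun _ => (1 : ℝ)) x * Y x | G n]
        =ᵐ[P] fun x => πa n x * μa n x)
    (hμb_n : P[fun x => (Ab n).indicator (fun _ => (1 : ℝ)) x * Y x | G n]
        =ᵐ[P] fun x => πb n x * μb n x)
    (hμa_rec : ∀ j < n,
        P[fun x => (Aa j).indicator (fun _ => (1 : ℝ)) x * μa (j + 1) x | G j]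
          =ᵐ[P] fun x => πa j x * μa j x)
    (hμb_rec : ∀ j < n,
        P[fun x => (Ab j).indicator (fun _ => (1 : ℝ)) x * μb (j + 1) x | G j]
          =ᵐ[P] fun x => πb j x * μb j x)
    (γa γb : Ω → ℝ)
    (hγa : γa = fun x =>
      (∏ j ∈ range (n + 1), (Aa j).indicator (fun _ => (1 : ℝ)) x / πa j x) * Y x
      + ∑ j ∈ range (n + 1),
          μa j x * (1 - (Aa j).indicator (fun _ => (1 : ℝ)) x / πa j x)
            * ∏ k ∈ range j, (Aa k).indicator (fun _ => (1 : ℝ)) x / πa k x)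
    (hγb : γb = fun x =>
      (∏ j ∈ range (n + 1), (Ab j).indicator (fun _ => (1 : ℝ)) x / πb j x) * Y x
      + ∑ j ∈ range (n + 1),
          μb j x * (1 - (Ab j).indicator (fun _ => (1 : ℝ)) x / πb j x)
            * ∏ k ∈ range j, (Ab k).indicator (fun _ => (1 : ℝ)) x / πb k x) :
    P[fun x => γa x - γb x | G 0] =ᵐ[P] fun x => μa 0 x - μb 0 x := by
  obtain ⟨hia, hcea⟩ := DR_arm n G hG_mono hG_le Y hY_meas CY hY_bd Aa hAa πa hπa_meas
    ε hε hπa_bd hπa_ce μa hμa_meas Cμ hμa_bd hμa_n hμa_rec γa hγa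
  obtain ⟨hib, hceb⟩ := DR_arm n G hG_mono hG_le Y hY_meas CY hY_bd Ab hAb πb hπb_meas
    ε hε hπb_bd hπb_ce μb hμb_meas Cμ hμb_bd hμb_n hμb_rec γb hγb
  have hsub := condExp_sub (μ := P) (m := G 0) hia hib
  have heq : (fun x => γa x - γb x) = γa - γb := rfl
  calc P[fun x => γa x - γb x | G 0] = P[γa - γb | G 0] := by rw [heq]
    _ =ᵐ[P] P[γa | G 0] - P[γb | G 0] := hsub
    _ =ᵐ[P] fun x => μa 0 x - μb 0 x := by
        filter_upwards [hcea, hceb] with x hx1 hx2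
        simp only [Pi.sub_apply, hx1, hx2]
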